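/- Let G be a finite group acting on finite sets X and Y, and let 𝒪 ⊆ X × Y be a G-stable subset whose characteristic matrix is irreducible. Then the set h(G,𝒪) of all solutions to the automorphism lifting problem above the characteristic matrix of 𝒪 is an abelian group under the Hadamard (entrywise) product, with identity element the characteristic matrix of 𝒪, and the inverse of A given by entrywise inversion on supp(A). -/

import Mathlib

open Matrix

/-- `A` is a solution of the automorphism lifting problem above the characteristic matrix of
`O` (cf. Lemma `without cover`): its entries lie in μ_n on `O` and vanish off `O`, and for
every `g ∈ G` there are diagonal μ_n matrices `L(g)`, `R(g)` with `A = L(g)(gA)R(g)*`. -/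
def SolvesALP (n : ℕ) (G : Type*) {X Y : Type*} [Group G] [MulAction G X] [MulAction G Y]
    (O : Set (X × Y)) (A : Matrix X Y ℂ) : Prop :=
  (∀ x y, (x, y) ∈ O → (A x y) ^ n = 1) ∧ (∀ x y, (x, y) ∉ O → A x y = 0) ∧
  ∀ g : G, ∃ (L : X → ℂ) (R : Y → ℂ), (∀ x, (L x) ^ n = 1) ∧ (∀ y, (R y) ^ n = 1) ∧
    ∀ x y, A x y = L x * A (g⁻¹ • x) (g⁻¹ • y) * star (R y)

/-- For a `G`-stable subset `O ⊆ X × Y` with irreducible characteristic matrix,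
the set of solutions of the automorphism lifting problem above the characteristic matrix of
`O` is an abelian group under the Hadamard product: it is closed and commutative under it,
the characteristic matrix of `O` is the neutral element, and the entrywise inverse supported
on `O` is the group inverse. -/
theorem stmt_3 {G X Y : Type*} [Group G] [Fintype G] [Fintype X] [Fintype Y]
    [MulAction G X] [MulAction G Y] (n : ℕ) (hn : 0 < n)
    (O : Set (X × Y)) [DecidablePred (· ∈ O)]
    (hstable : ∀ (g : G) (p : X × Y), p ∈ O → (g • p.1, g • p.2) ∈ O)
    (hirr : ¬ ∃ (I₁ : Set X) (J₁ : Set Y), I₁.Nonempty ∧ I₁ᶜ.Nonempty ∧ J₁.Nonempty ∧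
        J₁ᶜ.Nonempty ∧ ∀ x y, (x, y) ∈ O → (x ∈ I₁ ∧ y ∈ J₁) ∨ (x ∈ I₁ᶜ ∧ y ∈ J₁ᶜ)) :
    (∀ A B : Matrix X Y ℂ, SolvesALP n G O A → SolvesALP n G O B →
        SolvesALP n G O (Matrix.of fun x y => A x y * B x y)) ∧
    (∀ A B : Matrix X Y ℂ,
        (Matrix.of fun x y => A x y * B x y) = (Matrix.of fun x y => B x y * A x y)) ∧
    SolvesALP n G O (Matrix.of fun x y => if (x, y) ∈ O then (1 : ℂ) else 0) ∧
    (∀ A : Matrix X Y ℂ, SolvesALP n G O A →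
        (Matrix.of fun x y => A x y * (if (x, y) ∈ O then (1 : ℂ) else 0)) = A) ∧
    (∀ A : Matrix X Y ℂ, SolvesALP n G O A →
        SolvesALP n G O (Matrix.of fun x y => if (x, y) ∈ O then (A x y)⁻¹ else 0) ∧
        (Matrix.of fun x y => A x y * (if (x, y) ∈ O then (A x y)⁻¹ else 0)) =
          (Matrix.of fun x y => if (x, y) ∈ O then (1 : ℂ) else 0)) := by
  have hOiff : ∀ (g : G) (x : X) (y : Y), (x, y) ∈ O ↔ (g⁻¹ • x, g⁻¹ • y) ∈ O := by
    intro g x y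
    constructor
    · intro h; exact hstable g⁻¹ (x, y) h
    · intro h
      have := hstable g (g⁻¹ • x, g⁻¹ • y) h
      simpa using this
  refine ⟨?_, ?_, ?_, ?_, ?_⟩
  · rintro A B ⟨hA1, hA2, hA3⟩ ⟨hB1, hB2, hB3⟩
    refine ⟨fun x y h => by rw [Matrix.of_apply, mul_pow, hA1 x y h, hB1 x y h, one_mul],
      fun x y h => by rw [Matrix.of_apply, hA2 x y h, zero_mul], fun g => ?_⟩
    obtain ⟨L, R, hL, hR, hLR⟩ := hA3 g
    obtain ⟨L', R', hL', hR', hLR'⟩ := hB3 g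
    refine ⟨fun x => L x * L' x, fun y => R y * R' y,
      fun x => by rw [mul_pow, hL, hL', one_mul],
      fun y => by rw [mul_pow, hR, hR', one_mul], fun x y => ?_⟩
    simp only [Matrix.of_apply, star_mul']
    rw [hLR x y, hLR' x y]
    ring
  · intro A B; ext x y; simp [mul_comm]
  · refine ⟨fun x y h => by simp [h], fun x y h => by simp [h], fun g => ?_⟩
    refine ⟨fun _ => 1, fun _ => 1, fun _ => one_pow n, fun _ => one_pow n, fun x y => ?_⟩
    simp only [Matrix.of_apply, one_mul, star_one, mul_one]
    exact if_congr (hOiff g x y) rfl rfl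
  · rintro A ⟨hA1, hA2, hA3⟩
    ext x y
    by_cases h : (x, y) ∈ O
    · simp [h]
    · simp [h, hA2 x y h]
  · rintro A ⟨hA1, hA2, hA3⟩
    have hne : ∀ x y, (x, y) ∈ O → A x y ≠ 0 := by
      intro x y h h0
      have := hA1 x y h
      rw [h0, zero_pow hn.ne'] at this
      exact zero_ne_one this
    constructor
    · refine ⟨fun x y h => by rw [Matrix.of_apply, if_pos h, inv_pow, hA1 x y h, inv_one],
        fun x y h => by rw [Matrix.of_apply, if_neg h], fun g => ?_⟩
      obtain ⟨L, R, hL, hR, hLR⟩ := hA3 g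
      refine ⟨fun x => (L x)⁻¹, fun y => (R y)⁻¹,
        fun x => by rw [inv_pow, hL, inv_one], fun y => by rw [inv_pow, hR, inv_one],
        fun x y => ?_⟩
      simp only [Matrix.of_apply]
      by_cases h : (x, y) ∈ O
      · rw [if_pos h, if_pos ((hOiff g x y).1 h), hLR x y, star_inv₀, mul_inv, mul_inv]
      · rw [if_neg h, if_neg fun hc => h ((hOiff g x y).2 hc), mul_zero, zero_mul]
    · ext x y
      by_cases h : (x, y) ∈ O
      · simp [h, mul_inv_cancel₀ (hne x y h)]
      · simp [h, hA2 x y h]
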